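/- With ε_k = α_k h^{2^{k-1}-1} and q_k = A_k h^{2^{k-1}} from the Kogan iteration sequences, for k ≥ 3 one has ε_k = (1/2)·ε_{k-1}·(1+q_{k-1})·(q_{k-1} + q_{k-2}²). -/
import Mathlib


theorem eps_recursion (h : ℝ) (hh : 0 < h)
    (α β A c q ε : ℕ → ℝ)
    (hα1 : α 1 = 1) (hβ1 : β 1 = 1 / 2) (hc1 : c 1 = 1 + h) (hA1 : A 1 = 1)
    (hα : ∀ k, 2 ≤ k → α k = c (k - 1) * β (k - 1))
    (hβ : ∀ k, 2 ≤ k → β k = A (k - 1) ^ 2 * β (k - 1) + α k ^ 2 / 2)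
    (hA : ∀ k, 2 ≤ k → A k = A (k - 1) ^ 2 + α k * c (k - 1))
    (hc : ∀ k, 2 ≤ k → c k = c (k - 1) * (1 + A k * h ^ 2 ^ (k - 1)))
    (hq : ∀ k, q k = A k * h ^ 2 ^ (k - 1))
    (hε : ∀ k, ε k = α k * h ^ (2 ^ (k - 1) - 1)) :
    ∀ k, 3 ≤ k →
      ε k = 1 / 2 * ε (k - 1) * (1 + q (k - 1)) * (q (k - 1) + q (k - 2) ^ 2) := by
  intro k hk
  obtain ⟨j, rfl⟩ : ∃ j, k = j + 3 := ⟨k - 3, by omega⟩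
  have h1 : j + 3 - 1 = j + 2 := rfl
  have h2 : j + 3 - 2 = j + 1 := rfl
  have h3 : j + 2 - 1 = j + 1 := rfl
  have h4 : j + 1 - 1 = j := rfl
  rw [h1, h2, hε (j+3), hε (j+2), hq (j+2), hq (j+1), h1, h3, h4,
    hα (j+3) (by omega), h1, hc (j+2) (by omega), h3,
    hβ (j+2) (by omega), h3, hA (j+2) (by omega), h3,
    hα (j+2) (by omega), h3]
  have e1 : (2:ℕ) ^ (j+2) - 1 = (2 ^ (j+1) - 1) + 2 ^ (j+1) := by
    have : (2:ℕ) ^ (j+2) = 2 ^ (j+1) * 2 := by rw [pow_succ]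
    have h5 : 1 ≤ (2:ℕ) ^ (j+1) := Nat.one_le_two_pow
    omega
  have e2 : (A (j+1) * h ^ 2 ^ j) ^ 2 = A (j+1) ^ 2 * h ^ (2 ^ j * 2 ^ 1) := by
    rw [mul_pow, ← pow_mul]; norm_num
  rw [e1, pow_add, e2]
  ring
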